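/- There is a constant C depending only on a₀ > 0 and γ ∈ (1, 2] such that: for every integer h ≤ 0, all reals z, α, μ with |z|, |α|, |μ| ≤ 1/4, and every r ∈ ℝ with |r| ≤ a₀γ^{h+1}, the set S_h = {(k₀, k) ∈ ℝ × [−π, π] : (1+z)² k₀² + ((1+α)(cos k − 1) + r + γ^h μ)² ≤ a₀² γ^{2(h+1)}} has two-dimensional Lebesgue measure at most C γ^{3h/2}. -/

import Mathlib

open MeasureTheory

set_option maxHeartbeats 1000000

/-- Measure of the first-regime single-scale support: there is `C = C(a₀, γ) > 0`
such that for `h ≤ 0`, `|z|, |α|, |μ| ≤ 1/4` and `|r| ≤ a₀γ^{h+1}`, the set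
`S_h = {(k₀,k) ∈ ℝ × [-π,π] : (1+z)²k₀² + ((1+α)(cos k - 1) + r + γ^h μ)² ≤ a₀²γ^{2(h+1)}}`
has Lebesgue measure at most `C γ^{3h/2}`. -/
theorem stmt_7 (a₀ γ : ℝ) (ha₀ : 0 < a₀) (hγ1 : 1 < γ) (hγ2 : γ ≤ 2) :
    ∃ C > 0, ∀ h : ℤ, h ≤ 0 → ∀ z α μ r : ℝ,
      |z| ≤ 1 / 4 → |α| ≤ 1 / 4 → |μ| ≤ 1 / 4 → |r| ≤ a₀ * γ ^ (h + 1) →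
      volume {p : ℝ × ℝ | p.2 ∈ Set.Icc (-Real.pi) Real.pi ∧
          (1 + z) ^ 2 * p.1 ^ 2 +
              ((1 + α) * (Real.cos p.2 - 1) + r + γ ^ h * μ) ^ 2
            ≤ a₀ ^ 2 * γ ^ (2 * (h + 1))}
        ≤ ENNReal.ofReal (C * γ ^ (3 * (h : ℝ) / 2)) := by
  have hγ0 : (0:ℝ) < γ := by linarith
  have hπ : (0:ℝ) < Real.pi := Real.pi_pos
  set Ksq : ℝ := Real.pi ^ 2 * (6 * a₀ + 1) with hKsq
  have hKsq0 : 0 < Ksq := by positivity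
  set B : ℝ := Real.sqrt Ksq with hB
  have hB0 : 0 < B := Real.sqrt_pos.2 hKsq0
  refine ⟨12 * a₀ * B, by positivity, ?_⟩
  intro h hh z α μ r hz hα hμ hr
  set G : ℝ := γ ^ h with hGdef
  have hG0 : 0 < G := zpow_pos hγ0 h
  have hG1 : G ≤ 1 := zpow_le_one_of_nonpos₀ hγ1.le hh
  have hEh : γ ^ (h + 1) = γ * G := by
    rw [zpow_add₀ hγ0.ne', zpow_one, mul_comm]
  have hE2 : γ ^ (2 * (h + 1)) = (γ * G) ^ 2 := by
    rw [two_mul, zpow_add₀ hγ0.ne', hEh]; ring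
  -- the subset bound
  have hsub : {p : ℝ × ℝ | p.2 ∈ Set.Icc (-Real.pi) Real.pi ∧
          (1 + z) ^ 2 * p.1 ^ 2 +
              ((1 + α) * (Real.cos p.2 - 1) + r + γ ^ h * μ) ^ 2
            ≤ a₀ ^ 2 * γ ^ (2 * (h + 1))} ⊆
      Set.Icc (-(3 * a₀ * G)) (3 * a₀ * G) ×ˢ
        Set.Icc (-(B * Real.sqrt G)) (B * Real.sqrt G) := by
    rintro ⟨k₀, k⟩ ⟨⟨hk1, hk2⟩, hle⟩
    rw [hE2] at hle
    simp only [Set.mem_prod, Set.mem_Icc]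
    have hz' : (3:ℝ)/4 ≤ 1 + z := by
      have := abs_le.1 hz; linarith [this.1]
    have hα' : (3:ℝ)/4 ≤ 1 + α := by
      have := abs_le.1 hα; linarith [(abs_le.1 hα).1]
    have hr' := abs_le.1 (hr.trans_eq (by rw [hEh]))
    have hμ' := abs_le.1 hμ
    have hsqz : (0:ℝ) ≤ (1 + z) ^ 2 * k₀ ^ 2 := by positivity
    have hQsq : ((1 + α) * (Real.cos k - 1) + r + G * μ) ^ 2 ≤ (a₀ * (γ * G)) ^ 2 := by
      linarith
    have hEpos : (0:ℝ) < a₀ * (γ * G) := by positivity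
    -- bound on k₀
    have hQnn : (0:ℝ) ≤ ((1 + α) * (Real.cos k - 1) + r + G * μ) ^ 2 := sq_nonneg _
    have hzk : (1 + z) ^ 2 * k₀ ^ 2 ≤ (a₀ * (γ * G)) ^ 2 := by linarith
    have hE2b : (a₀ * (γ * G)) ^ 2 ≤ (2 * a₀ * G) ^ 2 := by
      have : a₀ * (γ * G) ≤ 2 * a₀ * G := by nlinarith [hG0.le, ha₀.le]
      nlinarith [hEpos.le]
    have hzsq : (9:ℝ)/16 ≤ (1 + z) ^ 2 := by nlinarith
    have hk₀sq : k₀ ^ 2 ≤ (3 * a₀ * G) ^ 2 := by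
      nlinarith [sq_nonneg k₀, hG0.le, ha₀.le, sq_nonneg (a₀ * G)]
    have hk₀ := abs_le_of_sq_le_sq' hk₀sq (by positivity)
    -- bound on k
    have hQ : |(1 + α) * (Real.cos k - 1) + r + G * μ| ≤ a₀ * (γ * G) :=
      abs_le_of_sq_le_sq hQsq hEpos.le
    have hQ' := abs_le.1 hQ
    have hcos : (1 + α) * (1 - Real.cos k) ≤ (4 * a₀ + 1/4) * G := by
      nlinarith [hQ'.1, hr'.1, hμ'.1, hμ'.2, hG0.le]
    have hcos2 : 1 - Real.cos k ≤ (6 * a₀ + 1) * G := by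
      nlinarith [hG0.le, ha₀.le]
    have hjordan : Real.cos k ≤ 1 - 2 / Real.pi ^ 2 * k ^ 2 :=
      Real.cos_le_one_sub_mul_cos_sq (abs_le.2 ⟨hk1, hk2⟩)
    have hksq : k ^ 2 ≤ Ksq * G := by
      have h1 : 2 / Real.pi ^ 2 * k ^ 2 ≤ (6 * a₀ + 1) * G := by linarith
      have hπ2 : (0:ℝ) < Real.pi ^ 2 / 2 := by positivity
      have h2 : k ^ 2 ≤ Real.pi ^ 2 / 2 * ((6 * a₀ + 1) * G) := by
        have h3 := mul_le_mul_of_nonneg_left h1 hπ2.le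
        have h4 : Real.pi ^ 2 / 2 * (2 / Real.pi ^ 2 * k ^ 2) = k ^ 2 := by
          field_simp
        linarith
      have ht : (0:ℝ) ≤ (6 * a₀ + 1) * G := by positivity
      rw [hKsq]
      calc k ^ 2 ≤ Real.pi ^ 2 / 2 * ((6 * a₀ + 1) * G) := h2
        _ ≤ Real.pi ^ 2 * ((6 * a₀ + 1) * G) :=
            mul_le_mul_of_nonneg_right (by linarith [sq_nonneg Real.pi]) ht
        _ = Real.pi ^ 2 * (6 * a₀ + 1) * G := by ring
    have hkabs : |k| ≤ B * Real.sqrt G := by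
      have : |k| = Real.sqrt (k ^ 2) := (Real.sqrt_sq_eq_abs k).symm
      rw [this, hB, ← Real.sqrt_mul hKsq0.le]
      exact Real.sqrt_le_sqrt hksq
    exact ⟨hk₀, abs_le.1 hkabs⟩
  -- measure of the rectangle
  calc volume _ ≤ volume (Set.Icc (-(3 * a₀ * G)) (3 * a₀ * G) ×ˢ
        Set.Icc (-(B * Real.sqrt G)) (B * Real.sqrt G)) := measure_mono hsub
    _ = ENNReal.ofReal (3 * a₀ * G - -(3 * a₀ * G)) *
        ENNReal.ofReal (B * Real.sqrt G - -(B * Real.sqrt G)) := by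
        rw [MeasureTheory.Measure.volume_eq_prod, MeasureTheory.Measure.prod_prod,
          Real.volume_Icc, Real.volume_Icc]
    _ = ENNReal.ofReal ((2 * (3 * a₀ * G)) * (2 * (B * Real.sqrt G))) := by
        rw [show (3 * a₀ * G - -(3 * a₀ * G)) = 2 * (3 * a₀ * G) by ring,
          show (B * Real.sqrt G - -(B * Real.sqrt G)) = 2 * (B * Real.sqrt G) by ring,
          ← ENNReal.ofReal_mul (by positivity)]
    _ ≤ ENNReal.ofReal (12 * a₀ * B * γ ^ (3 * (h : ℝ) / 2)) := by
        apply ENNReal.ofReal_le_ofReal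
        have hGr : G = γ ^ (h : ℝ) := by
          rw [Real.rpow_intCast]
        have hsqrtG : Real.sqrt G = γ ^ ((h : ℝ) / 2) := by
          rw [hGr, Real.sqrt_eq_rpow, ← Real.rpow_mul hγ0.le]
          congr 1
          ring
        have hGG : G * Real.sqrt G = γ ^ (3 * (h : ℝ) / 2) := by
          rw [hsqrtG, hGr, ← Real.rpow_add hγ0]
          congr 1
          ring
        rw [show (2 * (3 * a₀ * G)) * (2 * (B * Real.sqrt G))
            = 12 * a₀ * B * (G * Real.sqrt G) by ring, hGG]
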